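/- Let α ∈ K, let c : G → F be a family of scalars, and set u := Σ_{g ∈ G} c_g · g(α) ∈ K. Then for every F-linear form ℓ : K → F, the identity (Σ_{g ∈ G} ℓ(g(α))·g) · (Σ_{g ∈ G} c_g·g^{-1}) = Σ_{g ∈ G} ℓ(g(u))·g holds in the group algebra F[G]; that is, s_{α,ℓ} · u' = s_{u,ℓ}, where u' := Σ_{g ∈ G} c_g·g^{-1}. -/

import Mathlib

/-- for u = Σ_g c_g·g(α), every F-linear form ℓ : K → F
satisfies s_{α,ℓ} · (Σ_g c_g·g⁻¹) = s_{u,ℓ} in the group algebra F[G]. -/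
theorem projected_orbitSum_mul_eq
    (F K : Type*) [Field F] [Field K] [CharZero F] [Algebra F K]
    [FiniteDimensional F K] [IsGalois F K]
    [Fintype (K ≃ₐ[F] K)]
    (α : K) (c : (K ≃ₐ[F] K) → F) (ℓ : K →ₗ[F] F) :
    (∑ g : K ≃ₐ[F] K, MonoidAlgebra.single g (ℓ (g α))) *
        (∑ g : K ≃ₐ[F] K, MonoidAlgebra.single g⁻¹ (c g)) =
      ∑ g : K ≃ₐ[F] K,
        MonoidAlgebra.single g (ℓ (g (∑ h : K ≃ₐ[F] K, c h • h α))) := by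
  rw [Finset.sum_mul_sum]
  simp only [MonoidAlgebra.single_mul_single]
  rw [Finset.sum_comm]
  have key : ∀ h : K ≃ₐ[F] K,
      (∑ g : K ≃ₐ[F] K, MonoidAlgebra.single (g * h⁻¹) (ℓ (g α) * c h))
        = ∑ k : K ≃ₐ[F] K, MonoidAlgebra.single k (ℓ ((k * h) α) * c h) := by
    intro h
    exact Fintype.sum_equiv (Equiv.mulRight h)
      (fun k => MonoidAlgebra.single k (ℓ ((k * h) α) * c h))
      (fun g => MonoidAlgebra.single (g * h⁻¹) (ℓ (g α) * c h))
      (fun k => by simp) |>.symm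
  simp only [key]
  rw [Finset.sum_comm]
  refine Finset.sum_congr rfl fun k _ => ?_
  have : ℓ (k (∑ h : K ≃ₐ[F] K, c h • h α))
      = ∑ h : K ≃ₐ[F] K, ℓ ((k * h) α) * c h := by
    rw [map_sum, map_sum]
    refine Finset.sum_congr rfl fun h _ => ?_
    rw [map_smul, map_smul, smul_eq_mul, mul_comm]
    rfl
  rw [this]
  exact (map_sum (MonoidAlgebra.singleAddHom k) _ _).symm
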